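/- Let r ≥ 2, e ≥ 1 with e dividing r+1, B_j = r^{-1}(r-1)^j + (-1)^j(1-r^{-1}), and N_k as defined by the exponential-formula sum. Then N₄ = e²(r²-1)·((e+3)r² - 6er + 6e - 3). -/

import Mathlib

/-- `B_j = r⁻¹(r-1)^j + (-1)^j(1 - r⁻¹)`. -/
noncomputable def Bcoef (r : ℚ) (j : ℕ) : ℚ :=
  r⁻¹ * (r - 1) ^ j + (-1) ^ j * (1 - r⁻¹)

/-- Sequences `(λ_0, …, λ_k)` of non-negative integers with `λ_0 = λ_1 = 0`
and `∑ j·λ_j = k` (any sequence with `∑_{j ≥ 2} j λ_j = k` vanishes beyond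
index `k`, so this captures all finitely supported such sequences). -/
def partSeqs (k : ℕ) : Finset (Fin (k + 1) → ℕ) :=
  (Fintype.piFinset fun _ => Finset.range (k + 1)).filter
    fun lam => (∑ j : Fin (k + 1), (j : ℕ) * lam j) = k ∧
      ∀ j : Fin (k + 1), (j : ℕ) < 2 → lam j = 0

/-- `N_k = k! e^k ∑_{∑ jλ_j = k} C((r+1)/e, ∑λ_j)(∑λ_j)! ∏_j (B_j/j!)^{λ_j}/λ_j!`. -/
noncomputable def Ncoef (r e k : ℕ) : ℚ :=
  (k.factorial : ℚ) * (e : ℚ) ^ k *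
    ∑ lam ∈ partSeqs k,
      (((r + 1) / e).choose (∑ j : Fin (k + 1), lam j) : ℚ) *
        ((∑ j : Fin (k + 1), lam j).factorial : ℚ) *
        ∏ j : Fin (k + 1), (Bcoef (r : ℚ) (j : ℕ) / ((j : ℕ).factorial : ℚ)) ^ lam j /
          ((lam j).factorial : ℚ)

lemma partSeqs4 : partSeqs 4 = {![0,0,2,0,0], ![0,0,0,0,1]} := by
  set_option maxRecDepth 10000 in decide

/-- `N₄ = e²(r²-1)((e+3)r² - 6er + 6e - 3)`. -/
theorem stmt13 (r e : ℕ) (hr : 2 ≤ r) (he : 1 ≤ e) (hdvd : e ∣ r + 1) :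
    Ncoef r e 4 = (e : ℚ) ^ 2 * ((r : ℚ) ^ 2 - 1) *
      (((e : ℚ) + 3) * (r : ℚ) ^ 2 - 6 * (e : ℚ) * (r : ℚ) + 6 * (e : ℚ) - 3) := by
  have hr0 : (r : ℚ) ≠ 0 := by positivity
  have he0 : (e : ℚ) ≠ 0 := by positivity
  have hne : ![0,0,2,0,0] ≠ ![0,0,0,0,1] := by decide
  have hm : (((r + 1) / e : ℕ) : ℚ) = ((r : ℚ) + 1) / e := by
    have := Nat.div_mul_cancel hdvd
    field_simp
    exact_mod_cast this
  rw [Ncoef, partSeqs4, Finset.sum_pair hne]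
  simp only [Nat.reduceAdd, Fin.isValue, Fin.sum_univ_five, Fin.prod_univ_five, Matrix.cons_val_zero, Matrix.cons_val_one,
    Matrix.head_cons, Matrix.cons_val_fin_one, Bcoef, Fin.val_zero, Fin.val_one,
    show ((2:Fin 5):ℕ)=2 from rfl, show ((3:Fin 5):ℕ)=3 from rfl, show ((4:Fin 5):ℕ)=4 from rfl, Matrix.cons_val]
  norm_num [Nat.cast_choose_two, hm, Nat.factorial]
  field_simp
  ring
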